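/- Let $T>0$, $d\ge1$, and $\lambda\in L^\infty((0,T);\mathbb{R}^d)$. Let $m:[0,\infty)^2\to(0,\infty)$ be bounded (by some $C_0$) and locally Lipschitz continuous. Then the integral equation $a_t=m\big(\sqrt{\int_t^T|a_s|^2\,ds},\ \int_t^T a_s^\top\lambda(s)\,ds\big)\,\lambda(t)$, $t\in[0,T)$, has a unique solution $a\in L^\infty((0,T);\mathbb{R}^d)$. -/

import Mathlib

open MeasureTheory Set Filter

noncomputable section EquilibriumIEAux

variable {d : ℕ}

private def xInt (T : ℝ) (a : ℝ → EuclideanSpace ℝ (Fin d)) (t : ℝ) : ℝ :=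
  Real.sqrt (∫ s in Set.Ioc t T, ‖a s‖ ^ 2)

private def yInt (T : ℝ) (lam a : ℝ → EuclideanSpace ℝ (Fin d)) (t : ℝ) : ℝ :=
  ∫ s in Set.Ioc t T, (inner ℝ (a s) (lam s) : ℝ)

private def PhiMap (T : ℝ) (lam : ℝ → EuclideanSpace ℝ (Fin d)) (m : ℝ → ℝ → ℝ)
    (a : ℝ → EuclideanSpace ℝ (Fin d)) : ℝ → EuclideanSpace ℝ (Fin d) :=
  Set.indicator (Set.Ico 0 T)
    (fun t => m (xInt T a t) (yInt T lam a t) • lam t)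

private def picard (T : ℝ) (lam : ℝ → EuclideanSpace ℝ (Fin d)) (m : ℝ → ℝ → ℝ) :
    ℕ → ℝ → EuclideanSpace ℝ (Fin d) :=
  fun n => Nat.rec (fun _ => 0) (fun _ ih => PhiMap T lam m ih) n

private def Good (T M : ℝ) (a : ℝ → EuclideanSpace ℝ (Fin d)) : Prop :=
  Measurable a ∧ (∀ t, ‖a t‖ ≤ M) ∧ ∀ t, t ∉ Set.Ico 0 T → a t = 0

private lemma integrableOn_of_bdd {f : ℝ → ℝ} (hf : Measurable f) {c : ℝ}
    (hc : ∀ s, |f s| ≤ c) (t T : ℝ) : IntegrableOn f (Set.Ioc t T) := by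
  haveI : IsFiniteMeasure (volume.restrict (Set.Ioc t T)) :=
    ⟨by rw [Measure.restrict_apply_univ, Real.volume_Ioc]; exact ENNReal.ofReal_lt_top⟩
  exact (integrable_const c).mono' hf.aestronglyMeasurable.restrict
    (Eventually.of_forall fun s => by simpa using hc s)

private lemma abs_setIntegral_Ioc_le {f : ℝ → ℝ} (hf : Measurable f) {c : ℝ}
    (hc : ∀ s, |f s| ≤ c) {u v : ℝ} (huv : u ≤ v) :
    |∫ s in Set.Ioc u v, f s| ≤ c * (v - u) := by
  have h := norm_setIntegral_le_of_norm_le_const (μ := volume) (s := Set.Ioc u v) (f := f)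
    (C := c) (by rw [Real.volume_Ioc]; exact ENNReal.ofReal_lt_top)
    (fun s _ => by rw [Real.norm_eq_abs]; exact hc s)
  rwa [Real.norm_eq_abs, Real.volume_real_Ioc_of_le huv] at h

private lemma abs_setIntegral_Ioc_sub_le {f : ℝ → ℝ} (hf : Measurable f) {c : ℝ}
    (hc : ∀ s, |f s| ≤ c) (T : ℝ) {x y : ℝ} (hxy : x ≤ y) :
    |(∫ s in Set.Ioc x T, f s) - ∫ s in Set.Ioc y T, f s| ≤ c * (y - x) := by
  have hc0 : 0 ≤ c := (abs_nonneg _).trans (hc 0)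
  by_cases hyT : y ≤ T
  · have hsplit : Set.Ioc x T = Set.Ioc x y ∪ Set.Ioc y T :=
      (Set.Ioc_union_Ioc_eq_Ioc hxy hyT).symm
    rw [hsplit, setIntegral_union (Set.Ioc_disjoint_Ioc_of_le le_rfl) measurableSet_Ioc
      (integrableOn_of_bdd hf hc x y) (integrableOn_of_bdd hf hc y T)]
    simpa using abs_setIntegral_Ioc_le hf hc hxy
  · push_neg at hyT
    rw [Set.Ioc_eq_empty (not_lt.2 hyT.le), Measure.restrict_empty, integral_zero_measure,
      sub_zero]
    by_cases hxT : x ≤ T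
    · exact (abs_setIntegral_Ioc_le hf hc hxT).trans
        (mul_le_mul_of_nonneg_left (by linarith) hc0)
    · push_neg at hxT
      rw [Set.Ioc_eq_empty (not_lt.2 hxT.le), Measure.restrict_empty, integral_zero_measure]
      simpa using mul_nonneg hc0 (by linarith : (0:ℝ) ≤ y - x)

private lemma continuous_setIntegral_Ioc {f : ℝ → ℝ} (hf : Measurable f) {c : ℝ}
    (hc : ∀ s, |f s| ≤ c) (T : ℝ) : Continuous fun t => ∫ s in Set.Ioc t T, f s := by
  have hc0 : 0 ≤ c := (abs_nonneg _).trans (hc 0)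
  apply (LipschitzWith.of_dist_le_mul (K := c.toNNReal) ?_).continuous
  intro x y
  rw [Real.dist_eq, Real.dist_eq, Real.coe_toNNReal _ hc0]
  rcases le_total x y with h | h
  · calc |(∫ s in Set.Ioc x T, f s) - ∫ s in Set.Ioc y T, f s| ≤ c * (y - x) :=
        abs_setIntegral_Ioc_sub_le hf hc T h
      _ = c * |x - y| := by rw [abs_sub_comm, abs_of_nonneg (by linarith : (0:ℝ) ≤ y - x)]
  · calc |(∫ s in Set.Ioc x T, f s) - ∫ s in Set.Ioc y T, f s|
        = |(∫ s in Set.Ioc y T, f s) - ∫ s in Set.Ioc x T, f s| := abs_sub_comm _ _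
      _ ≤ c * (x - y) := abs_setIntegral_Ioc_sub_le hf hc T h
      _ = c * |x - y| := by rw [abs_of_nonneg (by linarith : (0:ℝ) ≤ x - y)]

private lemma integral_exp_Ioc_le {c : ℝ} (hc : 0 < c) (T t : ℝ) (ht : t ≤ T) :
    (∫ s in Set.Ioc t T, Real.exp (c * (T - s))) ≤ Real.exp (c * (T - t)) / c := by
  rw [← intervalIntegral.integral_of_le ht]
  have h1 : (∫ s in t..T, Real.exp (c * (T - s)))
      = ∫ u in (T - T)..(T - t), Real.exp (c * u) :=
    intervalIntegral.integral_comp_sub_left (fun u => Real.exp (c * u)) T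
  have h2 : (∫ u in (T - T)..(T - t), Real.exp (c * u))
      = c⁻¹ • ∫ x in c * (T - T)..c * (T - t), Real.exp x :=
    intervalIntegral.integral_comp_mul_left (fun x => Real.exp x) hc.ne'
  rw [h1, h2, integral_exp]
  have h3 : c * (T - T) = 0 := by ring
  rw [h3, Real.exp_zero, smul_eq_mul, div_eq_inv_mul]
  have := Real.exp_pos (c * (T - t))
  have hinv : (0:ℝ) ≤ c⁻¹ := inv_nonneg.2 hc.le
  nlinarith

private lemma abs_setIntegral_Ioc_le_of_support {T : ℝ} (hT : 0 ≤ T) {f : ℝ → ℝ}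
    (hf : Measurable f) {c : ℝ} (hc : ∀ s, |f s| ≤ c)
    (hz : ∀ s, s ∉ Set.Ico (0:ℝ) T → f s = 0) (t : ℝ) :
    |∫ s in Set.Ioc t T, f s| ≤ c * T := by
  have hc0 : 0 ≤ c := (abs_nonneg _).trans (hc 0)
  have heq : (∫ s in Set.Ioc t T, f s) = ∫ s in Set.Ioc t T ∩ Set.Ico 0 T, f s := by
    apply setIntegral_eq_of_subset_of_ae_diff_eq_zero measurableSet_Ioc.nullMeasurableSet
      Set.inter_subset_left
    exact Eventually.of_forall fun s hs => hz s fun hmem => hs.2 ⟨hs.1, hmem⟩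
  have hvol : volume (Set.Ioc t T ∩ Set.Ico 0 T) ≤ ENNReal.ofReal T := by
    calc volume (Set.Ioc t T ∩ Set.Ico 0 T) ≤ volume (Set.Ico (0:ℝ) T) :=
        measure_mono Set.inter_subset_right
      _ = ENNReal.ofReal T := by rw [Real.volume_Ico, sub_zero]
  have h := norm_setIntegral_le_of_norm_le_const (μ := volume)
    (s := Set.Ioc t T ∩ Set.Ico 0 T) (f := f) (C := c)
    (lt_of_le_of_lt hvol ENNReal.ofReal_lt_top)
    (fun s _ => by rw [Real.norm_eq_abs]; exact hc s)
  rw [Real.norm_eq_abs] at h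
  rw [heq]
  calc |∫ s in Set.Ioc t T ∩ Set.Ico 0 T, f s|
      ≤ c * (volume (Set.Ioc t T ∩ Set.Ico 0 T)).toReal := h
    _ ≤ c * T := mul_le_mul_of_nonneg_left (ENNReal.toReal_le_of_le_ofReal hT hvol) hc0

private lemma exists_lipschitzOnWith_of_locally {f : ℝ × ℝ → ℝ} {S R : Set (ℝ × ℝ)}
    {C : ℝ} (hC : 0 ≤ C) (hfb : ∀ q ∈ S, |f q| ≤ C) (hR : IsCompact R) (hRS : R ⊆ S)
    (h : ∀ p ∈ R, ∃ K : NNReal, ∃ s ∈ nhds p, LipschitzOnWith K f (s ∩ S)) :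
    ∃ K : NNReal, LipschitzOnWith K f R := by
  choose K s hs hlip using h
  obtain ⟨tf, htf⟩ := hR.elim_nhds_subcover' (fun p hp => interior (s p hp))
    (fun p hp => interior_mem_nhds.2 (hs p hp))
  have hcover : R ⊆ ⋃ i : {x // x ∈ tf}, interior (s i.1.1 i.1.2) := by
    intro x hx
    obtain ⟨p, hp, hxp⟩ := Set.mem_iUnion₂.1 (htf hx)
    exact Set.mem_iUnion.2 ⟨⟨p, hp⟩, hxp⟩
  obtain ⟨δ, hδ0, hδ⟩ := lebesgue_number_lemma_of_metric hR (fun _ => isOpen_interior) hcover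
  set L : NNReal := (tf.sup fun j : {x // x ∈ R} => K j.1 j.2) ⊔ Real.toNNReal (2 * C / δ)
    with hLdef
  refine ⟨L, LipschitzOnWith.of_dist_le_mul ?_⟩
  intro x hx y hy
  rcases lt_or_ge (dist x y) δ with hlt | hge
  · obtain ⟨i, hi⟩ := hδ x hx
    have hxi : x ∈ s i.1.1 i.1.2 ∩ S :=
      ⟨interior_subset (hi (Metric.mem_ball_self hδ0)), hRS hx⟩
    have hyi : y ∈ s i.1.1 i.1.2 ∩ S :=
      ⟨interior_subset (hi (by rwa [Metric.mem_ball, dist_comm])), hRS hy⟩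
    calc dist (f x) (f y) ≤ (K i.1.1 i.1.2 : ℝ) * dist x y :=
        (hlip i.1.1 i.1.2).dist_le_mul x hxi y hyi
      _ ≤ (L : ℝ) * dist x y := by
        apply mul_le_mul_of_nonneg_right _ dist_nonneg
        exact_mod_cast le_trans
          (Finset.le_sup (f := fun j : {x // x ∈ R} => K j.1 j.2) i.2) le_sup_left
  · have hfx := abs_le.1 (hfb x (hRS hx))
    have hfy := abs_le.1 (hfb y (hRS hy))
    have h2C : dist (f x) (f y) ≤ 2 * C := by
      rw [Real.dist_eq]
      exact abs_le.2 ⟨by linarith [hfx.1, hfy.2], by linarith [hfx.2, hfy.1]⟩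
    have hL : 2 * C / δ ≤ (L : ℝ) := by
      have h1 : (Real.toNNReal (2 * C / δ) : ℝ) ≤ (L : ℝ) := by
        exact_mod_cast (le_sup_right :
          Real.toNNReal (2 * C / δ) ≤ (tf.sup fun j : {x // x ∈ R} => K j.1 j.2)
            ⊔ Real.toNNReal (2 * C / δ))
      rwa [Real.coe_toNNReal _ (by positivity)] at h1
    calc dist (f x) (f y) ≤ 2 * C := h2C
      _ = (2 * C / δ) * δ := by field_simp
      _ ≤ (2 * C / δ) * dist x y := mul_le_mul_of_nonneg_left hge (by positivity)
      _ ≤ (L : ℝ) * dist x y := mul_le_mul_of_nonneg_right hL dist_nonneg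

private lemma sqrt_integral_sq_triangle {μ : Measure ℝ} [IsFiniteMeasure μ]
    {f g : ℝ → EuclideanSpace ℝ (Fin d)} (hf : Measurable f) (hg : Measurable g)
    {Cf Cg : ℝ} (hCf : ∀ s, ‖f s‖ ≤ Cf) (hCg : ∀ s, ‖g s‖ ≤ Cg) :
    Real.sqrt (∫ s, ‖f s‖ ^ 2 ∂μ) ≤
      Real.sqrt (∫ s, ‖g s‖ ^ 2 ∂μ) + Real.sqrt (∫ s, ‖f s - g s‖ ^ 2 ∂μ) := by
  have hCg0 : 0 ≤ Cg := (norm_nonneg _).trans (hCg 0)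
  have hCfg : ∀ s, ‖f s - g s‖ ≤ Cf + Cg := fun s =>
    (norm_sub_le _ _).trans (add_le_add (hCf s) (hCg s))
  have hCfg0 : 0 ≤ Cf + Cg := (norm_nonneg _).trans (hCfg 0)
  set B := ∫ s, ‖g s‖ ^ 2 ∂μ with hBdef
  set D := ∫ s, ‖f s - g s‖ ^ 2 ∂μ with hDdef
  have hB0 : 0 ≤ B := integral_nonneg fun s => sq_nonneg _
  have hD0 : 0 ≤ D := integral_nonneg fun s => sq_nonneg _
  -- integrability helpers
  have hint : ∀ (h : ℝ → ℝ), Measurable h → ∀ (c : ℝ), (∀ s, |h s| ≤ c) →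
      Integrable h μ := fun h hh c hc =>
    (integrable_const c).mono' hh.aestronglyMeasurable (Eventually.of_forall fun s => by
      simpa using hc s)
  have hmf : Measurable fun s => ‖f s‖ := hf.norm
  have hmg : Measurable fun s => ‖g s‖ := hg.norm
  have hmfg : Measurable fun s => ‖f s - g s‖ := (hf.sub hg).norm
  have int_f2 : Integrable (fun s => ‖f s‖ ^ 2) μ :=
    hint _ (hmf.pow_const 2) (Cf ^ 2) fun s => by
      rw [abs_of_nonneg (sq_nonneg _)]
      exact pow_le_pow_left₀ (norm_nonneg _) (hCf s) 2
  have int_g2 : Integrable (fun s => ‖g s‖ ^ 2) μ :=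
    hint _ (hmg.pow_const 2) (Cg ^ 2) fun s => by
      rw [abs_of_nonneg (sq_nonneg _)]
      exact pow_le_pow_left₀ (norm_nonneg _) (hCg s) 2
  have int_fg2 : Integrable (fun s => ‖f s - g s‖ ^ 2) μ :=
    hint _ (hmfg.pow_const 2) ((Cf + Cg) ^ 2) fun s => by
      rw [abs_of_nonneg (sq_nonneg _)]
      exact pow_le_pow_left₀ (norm_nonneg _) (hCfg s) 2
  have int_cross : Integrable (fun s => ‖g s‖ * ‖f s - g s‖) μ :=
    hint _ (hmg.mul hmfg) (Cg * (Cf + Cg)) fun s => by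
      rw [abs_of_nonneg (mul_nonneg (norm_nonneg _) (norm_nonneg _))]
      exact mul_le_mul (hCg s) (hCfg s) (norm_nonneg _) hCg0
  -- Cauchy–Schwarz
  have hCS : (∫ s, ‖g s‖ * ‖f s - g s‖ ∂μ) ≤ Real.sqrt B * Real.sqrt D := by
    have hpq : Real.HolderConjugate 2 2 := Real.HolderConjugate.two_two
    have hg2 : MemLp (fun s => ‖g s‖) (ENNReal.ofReal 2) μ :=
      MemLp.of_bound hmg.aestronglyMeasurable Cg
        (Eventually.of_forall fun s => by rw [norm_norm]; exact hCg s)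
    have hfg2 : MemLp (fun s => ‖f s - g s‖) (ENNReal.ofReal 2) μ :=
      MemLp.of_bound hmfg.aestronglyMeasurable (Cf + Cg)
        (Eventually.of_forall fun s => by rw [norm_norm]; exact hCfg s)
    have h := integral_mul_le_Lp_mul_Lq_of_nonneg hpq
      (Eventually.of_forall fun s => norm_nonneg (g s))
      (Eventually.of_forall fun s => norm_nonneg (f s - g s)) hg2 hfg2
    have h2 : ∀ x : ℝ, x ^ (2:ℝ) = x ^ (2:ℕ) := fun x => by
      rw [show ((2:ℝ)) = ((2:ℕ):ℝ) by norm_num, Real.rpow_natCast]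
    simp only [h2] at h
    rw [← Real.sqrt_eq_rpow, ← Real.sqrt_eq_rpow] at h
    exact h
  have key1 : (∫ s, ‖f s‖ ^ 2 ∂μ) ≤ B + 2 * (Real.sqrt B * Real.sqrt D) + D := by
    have hpt : ∀ s, ‖f s‖ ^ 2 ≤ ‖g s‖ ^ 2 + 2 * (‖g s‖ * ‖f s - g s‖) + ‖f s - g s‖ ^ 2 := by
      intro s
      have h1 : ‖f s‖ ≤ ‖g s‖ + ‖f s - g s‖ := by
        calc ‖f s‖ = ‖g s + (f s - g s)‖ := by rw [add_sub_cancel]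
          _ ≤ _ := norm_add_le _ _
      nlinarith [norm_nonneg (f s), norm_nonneg (g s), norm_nonneg (f s - g s)]
    calc (∫ s, ‖f s‖ ^ 2 ∂μ)
        ≤ ∫ s, (‖g s‖ ^ 2 + 2 * (‖g s‖ * ‖f s - g s‖) + ‖f s - g s‖ ^ 2) ∂μ :=
          integral_mono int_f2 ((int_g2.add (int_cross.const_mul 2)).add int_fg2) hpt
      _ = B + 2 * (∫ s, ‖g s‖ * ‖f s - g s‖ ∂μ) + D := by
          rw [integral_add (f := fun s => ‖g s‖ ^ 2 + 2 * (‖g s‖ * ‖f s - g s‖))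
            (g := fun s => ‖f s - g s‖ ^ 2) (int_g2.add (int_cross.const_mul 2)) int_fg2,
            integral_add (f := fun s => ‖g s‖ ^ 2)
            (g := fun s => 2 * (‖g s‖ * ‖f s - g s‖)) int_g2 (int_cross.const_mul 2),
            integral_const_mul]
      _ ≤ B + 2 * (Real.sqrt B * Real.sqrt D) + D := by nlinarith [hCS]
  have key2 : (∫ s, ‖f s‖ ^ 2 ∂μ) ≤ (Real.sqrt B + Real.sqrt D) ^ 2 := by
    have hBB := Real.sq_sqrt hB0
    have hDD := Real.sq_sqrt hD0
    nlinarith [key1]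
  calc Real.sqrt (∫ s, ‖f s‖ ^ 2 ∂μ) ≤ Real.sqrt ((Real.sqrt B + Real.sqrt D) ^ 2) :=
      Real.sqrt_le_sqrt key2
    _ = Real.sqrt B + Real.sqrt D := Real.sqrt_sq (by positivity)



set_option maxHeartbeats 3000000 in
/-- Existence and uniqueness of the bounded solution of the fully nonlinear
backward integral equation characterizing equilibrium portfolios under GDA
preferences. -/
theorem equilibrium_integral_equation_exists_unique
    (T : ℝ) (hT : 0 < T) (d : ℕ) (hd : 1 ≤ d)
    (lam : ℝ → EuclideanSpace ℝ (Fin d)) (hlam_meas : Measurable lam)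
    (hlam_bdd : ∃ Λ : ℝ, ∀ t : ℝ, ‖lam t‖ ≤ Λ)
    (m : ℝ → ℝ → ℝ) (C₀ : ℝ) (hC₀ : 0 < C₀)
    (hm_pos : ∀ x y : ℝ, 0 ≤ x → 0 < m x y)
    (hm_bdd : ∀ x y : ℝ, 0 ≤ x → m x y ≤ C₀)
    (hm_locLip : ∀ p : ℝ × ℝ, 0 ≤ p.1 → ∃ K : NNReal, ∃ s ∈ nhds p,
      LipschitzOnWith K (fun q : ℝ × ℝ => m q.1 q.2)
        (s ∩ {q : ℝ × ℝ | 0 ≤ q.1})) :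
    (∃ a : ℝ → EuclideanSpace ℝ (Fin d), Measurable a ∧
      (∃ C : ℝ, ∀ t : ℝ, ‖a t‖ ≤ C) ∧
      (∀ t ∈ Set.Ico 0 T,
        a t = m (Real.sqrt (∫ s in Set.Ioc t T, ‖a s‖ ^ 2))
                (∫ s in Set.Ioc t T, (inner ℝ (a s) (lam s) : ℝ)) • lam t)) ∧
    (∀ a b : ℝ → EuclideanSpace ℝ (Fin d),
      Measurable a → (∃ C : ℝ, ∀ t : ℝ, ‖a t‖ ≤ C) →
      (∀ t ∈ Set.Ico 0 T,
        a t = m (Real.sqrt (∫ s in Set.Ioc t T, ‖a s‖ ^ 2))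
                (∫ s in Set.Ioc t T, (inner ℝ (a s) (lam s) : ℝ)) • lam t) →
      Measurable b → (∃ C : ℝ, ∀ t : ℝ, ‖b t‖ ≤ C) →
      (∀ t ∈ Set.Ico 0 T,
        b t = m (Real.sqrt (∫ s in Set.Ioc t T, ‖b s‖ ^ 2))
                (∫ s in Set.Ioc t T, (inner ℝ (b s) (lam s) : ℝ)) • lam t) →
      ∀ t ∈ Set.Ico 0 T, a t = b t) := by
  classical
  obtain ⟨Λ₀, hΛ₀⟩ := hlam_bdd
  set Λ : ℝ := max Λ₀ 0 with hΛdef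
  have hΛ : ∀ t, ‖lam t‖ ≤ Λ := fun t => (hΛ₀ t).trans (le_max_left _ _)
  have hΛ0 : 0 ≤ Λ := le_max_right _ _
  set M : ℝ := C₀ * Λ with hMdef
  have hM0 : 0 ≤ M := mul_nonneg hC₀.le hΛ0
  set X : ℝ := Real.sqrt T * M with hXdef
  set Y : ℝ := T * (M * Λ) with hYdef
  set S : Set (ℝ × ℝ) := {q : ℝ × ℝ | 0 ≤ q.1} with hSdef
  set R : Set (ℝ × ℝ) := Set.Icc 0 X ×ˢ Set.Icc (-Y) Y with hRdef
  have hRS : R ⊆ S := fun q hq => hq.1.1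
  have hfb : ∀ q ∈ S, |(fun q : ℝ × ℝ => m q.1 q.2) q| ≤ C₀ := fun q hq =>
    abs_le.2 ⟨by have := hm_pos q.1 q.2 hq; linarith, hm_bdd q.1 q.2 hq⟩
  obtain ⟨K, hK⟩ := exists_lipschitzOnWith_of_locally hC₀.le hfb
    (isCompact_Icc.prod isCompact_Icc) hRS (fun p hp => hm_locLip p (hRS hp))
  have hK0 : (0:ℝ) ≤ K := K.coe_nonneg
  set β : ℝ := 1 + 8 * ((K : ℝ) * Λ) ^ 2 + 4 * ((K : ℝ) * Λ * Λ) with hβdef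
  have hβ8 : 8 * ((K : ℝ) * Λ) ^ 2 ≤ β := by
    rw [hβdef]; nlinarith [sq_nonneg ((K:ℝ) * Λ), mul_nonneg (mul_nonneg hK0 hΛ0) hΛ0]
  have hβ4 : 4 * ((K : ℝ) * Λ * Λ) ≤ β := by
    rw [hβdef]; nlinarith [sq_nonneg ((K:ℝ) * Λ), mul_nonneg (mul_nonneg hK0 hΛ0) hΛ0]
  have hβ1 : 1 ≤ β := by
    rw [hβdef]; nlinarith [sq_nonneg ((K:ℝ) * Λ), mul_nonneg (mul_nonneg hK0 hΛ0) hΛ0]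
  have hβ0 : 0 < β := by linarith
  have hsqrt2β : 0 < Real.sqrt (2 * β) := Real.sqrt_pos.2 (by linarith)
  have hcontr : (K : ℝ) * Λ / Real.sqrt (2 * β) + (K : ℝ) * Λ * Λ / β ≤ 1 / 2 := by
    have hκ0 : 0 ≤ (K:ℝ) * Λ := mul_nonneg hK0 hΛ0
    have h1 : (K : ℝ) * Λ / Real.sqrt (2 * β) ≤ 1 / 4 := by
      have h4 : 4 * ((K:ℝ) * Λ) ≤ Real.sqrt (2 * β) := by
        rw [show (4 * ((K:ℝ)*Λ)) = Real.sqrt ((4 * ((K:ℝ)*Λ)) ^ 2) from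
          (Real.sqrt_sq (by positivity)).symm]
        apply Real.sqrt_le_sqrt; nlinarith
      rw [div_le_iff₀ hsqrt2β]; linarith
    have h2 : (K : ℝ) * Λ * Λ / β ≤ 1 / 4 := by
      rw [div_le_iff₀ hβ0]
      have hκΛ0 : 0 ≤ (K:ℝ) * Λ * Λ := mul_nonneg hκ0 hΛ0
      nlinarith
    linarith
  have hm_abs : ∀ x y : ℝ, 0 ≤ x → |m x y| ≤ C₀ := fun x y hx =>
    abs_le.2 ⟨by have := hm_pos x y hx; linarith, hm_bdd x y hx⟩
  have hinner_bdd : ∀ (a : ℝ → EuclideanSpace ℝ (Fin d)), (∀ t, ‖a t‖ ≤ M) →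
      ∀ s, |(inner ℝ (a s) (lam s) : ℝ)| ≤ M * Λ := fun a ha s =>
    (abs_real_inner_le_norm _ _).trans (mul_le_mul (ha s) (hΛ s) (norm_nonneg _) hM0)
  have hsq_bdd : ∀ (a : ℝ → EuclideanSpace ℝ (Fin d)), (∀ t, ‖a t‖ ≤ M) →
      ∀ s, |‖a s‖ ^ 2| ≤ M ^ 2 := fun a ha s => by
    rw [abs_of_nonneg (sq_nonneg _)]
    exact pow_le_pow_left₀ (norm_nonneg _) (ha s) 2
  have hx0 : ∀ (a : ℝ → EuclideanSpace ℝ (Fin d)) t, 0 ≤ xInt T a t :=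
    fun a t => Real.sqrt_nonneg _
  have mem_R : ∀ a, Good T M a → ∀ t, (xInt T a t, yInt T lam a t) ∈ R := by
    intro a ha t
    obtain ⟨haM, haB, haZ⟩ := ha
    refine ⟨⟨hx0 a t, ?_⟩, ?_⟩
    · have h := abs_setIntegral_Ioc_le_of_support hT.le (haM.norm.pow_const 2)
        (hsq_bdd a haB) (fun s hs => by rw [haZ s hs]; simp) t
      have h2 : (∫ s in Set.Ioc t T, ‖a s‖ ^ 2) ≤ M ^ 2 * T := le_of_abs_le h
      calc xInt T a t ≤ Real.sqrt (M ^ 2 * T) := by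
            simp only [xInt]; exact Real.sqrt_le_sqrt h2
        _ = X := by
            rw [hXdef, Real.sqrt_mul (sq_nonneg M), Real.sqrt_sq hM0, mul_comm]
    · have h := abs_setIntegral_Ioc_le_of_support hT.le (haM.inner hlam_meas)
        (hinner_bdd a haB) (fun s hs => by rw [haZ s hs]; simp) t
      have h' : |yInt T lam a t| ≤ Y := by
        rw [hYdef]
        calc |yInt T lam a t| ≤ M * Λ * T := h
          _ = T * (M * Λ) := by ring
      exact ⟨neg_le_of_abs_le h', le_of_abs_le h'⟩
  have cont_m : ∀ a, Good T M a →
      Continuous fun t => m (xInt T a t) (yInt T lam a t) := by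
    intro a ha
    obtain ⟨haM, haB, haZ⟩ := ha
    have cx : Continuous fun t => xInt T a t := by
      simp only [xInt]
      exact Real.continuous_sqrt.comp
        (continuous_setIntegral_Ioc (haM.norm.pow_const 2) (hsq_bdd a haB) T)
    have cy : Continuous fun t => yInt T lam a t := by
      simp only [yInt]
      exact continuous_setIntegral_Ioc (haM.inner hlam_meas) (hinner_bdd a haB) T
    have := hK.continuousOn.comp_continuous (cx.prodMk cy) (mem_R a ⟨haM, haB, haZ⟩)
    exact this
  have good_Phi : ∀ a, Good T M a → Good T M (PhiMap T lam m a) := by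
    intro a ha
    refine ⟨((cont_m a ha).measurable.smul hlam_meas).indicator measurableSet_Ico, ?_, ?_⟩
    · intro t
      simp only [PhiMap]
      by_cases h : t ∈ Set.Ico (0:ℝ) T
      · rw [Set.indicator_of_mem h, hMdef]
        calc ‖m (xInt T a t) (yInt T lam a t) • lam t‖
            = |m (xInt T a t) (yInt T lam a t)| * ‖lam t‖ := by
              rw [norm_smul, Real.norm_eq_abs]
          _ ≤ C₀ * Λ := mul_le_mul (hm_abs _ _ (hx0 a t)) (hΛ t) (norm_nonneg _) hC₀.le
      · rw [Set.indicator_of_notMem h]; simpa using hM0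
    · intro t ht; exact Set.indicator_of_notMem ht _
  -- the fundamental contraction estimate
  have key : ∀ c : ℝ, 0 ≤ c → ∀ a b, Good T M a → Good T M b →
      (∀ s, ‖a s - b s‖ ≤ c * Real.exp (β * (T - s))) →
      ∀ t, ‖PhiMap T lam m a t - PhiMap T lam m b t‖
        ≤ 1 / 2 * (c * Real.exp (β * (T - t))) := by
    intro c hc a b ha hb hab t
    have hEpos : ∀ u : ℝ, (0:ℝ) < Real.exp u := fun u => Real.exp_pos u
    by_cases ht : t ∈ Set.Ico (0:ℝ) T
    swap
    · simp only [PhiMap, Set.indicator_of_notMem ht, sub_zero, norm_zero]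
      have : (0:ℝ) ≤ c * Real.exp (β * (T - t)) :=
        mul_nonneg hc (hEpos _).le
      linarith
    obtain ⟨haM, haB, haZ⟩ := ha
    obtain ⟨hbM, hbB, hbZ⟩ := hb
    have htT : t ≤ T := ht.2.le
    haveI : IsFiniteMeasure (volume.restrict (Set.Ioc t T)) :=
      ⟨by rw [Measure.restrict_apply_univ, Real.volume_Ioc]; exact ENNReal.ofReal_lt_top⟩
    have habM : ∀ s, ‖a s - b s‖ ≤ 2 * M := fun s =>
      (norm_sub_le _ _).trans (by have := haB s; have := hbB s; linarith)
    -- bound for |xInt a - xInt b|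
    have hQdef : ∀ s, ‖a s - b s‖ ^ 2 ≤ c ^ 2 * Real.exp (2 * β * (T - s)) := by
      intro s
      have h2 : Real.exp (β * (T - s)) ^ 2 = Real.exp (2 * β * (T - s)) := by
        rw [show (2:ℝ) * β * (T - s) = (2:ℕ) * (β * (T - s)) by push_cast; ring,
          Real.exp_nat_mul]
      calc ‖a s - b s‖ ^ 2 ≤ (c * Real.exp (β * (T - s))) ^ 2 :=
          pow_le_pow_left₀ (norm_nonneg _) (hab s) 2
        _ = c ^ 2 * Real.exp (2 * β * (T - s)) := by rw [mul_pow, h2]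
    have int_ab2 : IntegrableOn (fun s => ‖a s - b s‖ ^ 2) (Set.Ioc t T) :=
      integrableOn_of_bdd ((haM.sub hbM).norm.pow_const 2) (c := (2*M)^2)
        (fun s => by
          rw [abs_of_nonneg (sq_nonneg _)]
          exact pow_le_pow_left₀ (norm_nonneg _) (habM s) 2) t T
    have cont_w : Continuous fun s : ℝ => c ^ 2 * Real.exp (2 * β * (T - s)) := by fun_prop
    have hQ : (∫ s in Set.Ioc t T, ‖a s - b s‖ ^ 2)
        ≤ c ^ 2 * (Real.exp (2 * β * (T - t)) / (2 * β)) := by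
      calc (∫ s in Set.Ioc t T, ‖a s - b s‖ ^ 2)
          ≤ ∫ s in Set.Ioc t T, c ^ 2 * Real.exp (2 * β * (T - s)) :=
            setIntegral_mono_on int_ab2 cont_w.integrableOn_Ioc measurableSet_Ioc
              fun s _ => hQdef s
        _ = c ^ 2 * ∫ s in Set.Ioc t T, Real.exp (2 * β * (T - s)) := integral_const_mul _ _
        _ ≤ c ^ 2 * (Real.exp (2 * β * (T - t)) / (2 * β)) :=
            mul_le_mul_of_nonneg_left
              (integral_exp_Ioc_le (by linarith : (0:ℝ) < 2 * β) T t htT) (sq_nonneg c)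
    have hΔx : |xInt T a t - xInt T b t|
        ≤ c * Real.exp (β * (T - t)) / Real.sqrt (2 * β) := by
      have hrhs : c ^ 2 * (Real.exp (2 * β * (T - t)) / (2 * β))
          = (c * Real.exp (β * (T - t)) / Real.sqrt (2 * β)) ^ 2 := by
        rw [div_pow, mul_pow, Real.sq_sqrt (by linarith : (0:ℝ) ≤ 2 * β),
          show Real.exp (β * (T - t)) ^ 2 = Real.exp (2 * β * (T - t)) by
            rw [show (2:ℝ) * β * (T - t) = (2:ℕ) * (β * (T - t)) by push_cast; ring,
              Real.exp_nat_mul]]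
        ring
      have hsqQ : Real.sqrt (∫ s in Set.Ioc t T, ‖a s - b s‖ ^ 2)
          ≤ c * Real.exp (β * (T - t)) / Real.sqrt (2 * β) := by
        calc Real.sqrt (∫ s in Set.Ioc t T, ‖a s - b s‖ ^ 2)
            ≤ Real.sqrt ((c * Real.exp (β * (T - t)) / Real.sqrt (2 * β)) ^ 2) :=
              Real.sqrt_le_sqrt (hQ.trans_eq hrhs)
          _ = c * Real.exp (β * (T - t)) / Real.sqrt (2 * β) :=
              Real.sqrt_sq (div_nonneg (mul_nonneg hc (hEpos _).le) hsqrt2β.le)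
      have h1 : xInt T a t ≤ xInt T b t
          + Real.sqrt (∫ s in Set.Ioc t T, ‖a s - b s‖ ^ 2) := by
        simp only [xInt]
        exact sqrt_integral_sq_triangle haM hbM haB hbB
      have h2 : xInt T b t ≤ xInt T a t
          + Real.sqrt (∫ s in Set.Ioc t T, ‖a s - b s‖ ^ 2) := by
        simp only [xInt]
        have := sqrt_integral_sq_triangle (μ := volume.restrict (Set.Ioc t T))
          hbM haM hbB haB
        simpa [norm_sub_rev] using this
      exact abs_sub_le_iff.2 ⟨by linarith, by linarith⟩
    -- bound for |yInt a - yInt b|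
    have int_ia : IntegrableOn (fun s => (inner ℝ (a s) (lam s) : ℝ)) (Set.Ioc t T) :=
      integrableOn_of_bdd (haM.inner hlam_meas) (hinner_bdd a haB) t T
    have int_ib : IntegrableOn (fun s => (inner ℝ (b s) (lam s) : ℝ)) (Set.Ioc t T) :=
      integrableOn_of_bdd (hbM.inner hlam_meas) (hinner_bdd b hbB) t T
    have hΔy : |yInt T lam a t - yInt T lam b t|
        ≤ Λ * (c * Real.exp (β * (T - t)) / β) := by
      have hsub : yInt T lam a t - yInt T lam b t
          = ∫ s in Set.Ioc t T,
              ((inner ℝ (a s) (lam s) : ℝ) - (inner ℝ (b s) (lam s) : ℝ)) := by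
        simp only [yInt]
        exact (integral_sub int_ia int_ib).symm
      rw [hsub]
      have hptw : ∀ s, ‖(inner ℝ (a s) (lam s) : ℝ) - (inner ℝ (b s) (lam s) : ℝ)‖
          ≤ Λ * c * Real.exp (β * (T - s)) := by
        intro s
        rw [Real.norm_eq_abs, show (inner ℝ (a s) (lam s) : ℝ) - (inner ℝ (b s) (lam s) : ℝ)
          = (inner ℝ (a s - b s) (lam s) : ℝ) from (inner_sub_left _ _ _).symm]
        calc |(inner ℝ (a s - b s) (lam s) : ℝ)| ≤ ‖a s - b s‖ * ‖lam s‖ :=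
            abs_real_inner_le_norm _ _
          _ ≤ (c * Real.exp (β * (T - s))) * Λ :=
            mul_le_mul (hab s) (hΛ s) (norm_nonneg _) (mul_nonneg hc (hEpos _).le)
          _ = Λ * c * Real.exp (β * (T - s)) := by ring
      have int_d : IntegrableOn
          (fun s => (inner ℝ (a s) (lam s) : ℝ) - (inner ℝ (b s) (lam s) : ℝ)) (Set.Ioc t T) :=
        int_ia.sub int_ib
      have cont_w2 : Continuous fun s : ℝ => Λ * c * Real.exp (β * (T - s)) := by fun_prop
      calc |∫ s in Set.Ioc t T, ((inner ℝ (a s) (lam s) : ℝ) - (inner ℝ (b s) (lam s) : ℝ))|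
          ≤ ∫ s in Set.Ioc t T,
              ‖(inner ℝ (a s) (lam s) : ℝ) - (inner ℝ (b s) (lam s) : ℝ)‖ := by
            rw [← Real.norm_eq_abs]
            exact norm_integral_le_integral_norm _
        _ ≤ ∫ s in Set.Ioc t T, Λ * c * Real.exp (β * (T - s)) :=
            setIntegral_mono_on int_d.norm cont_w2.integrableOn_Ioc measurableSet_Ioc
              fun s _ => hptw s
        _ = Λ * c * ∫ s in Set.Ioc t T, Real.exp (β * (T - s)) := integral_const_mul _ _
        _ ≤ Λ * c * (Real.exp (β * (T - t)) / β) :=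
            mul_le_mul_of_nonneg_left (integral_exp_Ioc_le hβ0 T t htT)
              (mul_nonneg hΛ0 hc)
        _ = Λ * (c * Real.exp (β * (T - t)) / β) := by ring
    -- assemble
    have hmemA := mem_R a ⟨haM, haB, haZ⟩ t
    have hmemB := mem_R b ⟨hbM, hbB, hbZ⟩ t
    have hd := hK.dist_le_mul _ hmemA _ hmemB
    simp only [Prod.dist_eq, Real.dist_eq] at hd
    have hΔm : |m (xInt T a t) (yInt T lam a t) - m (xInt T b t) (yInt T lam b t)|
        ≤ (K:ℝ) * (c * Real.exp (β * (T - t)) / Real.sqrt (2 * β)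
          + Λ * (c * Real.exp (β * (T - t)) / β)) := by
      calc |m (xInt T a t) (yInt T lam a t) - m (xInt T b t) (yInt T lam b t)|
          ≤ (K:ℝ) * max |xInt T a t - xInt T b t| |yInt T lam a t - yInt T lam b t| := hd
        _ ≤ (K:ℝ) * (|xInt T a t - xInt T b t| + |yInt T lam a t - yInt T lam b t|) :=
            mul_le_mul_of_nonneg_left
              (max_le (le_add_of_nonneg_right (abs_nonneg _))
                (le_add_of_nonneg_left (abs_nonneg _))) hK0
        _ ≤ _ := mul_le_mul_of_nonneg_left (add_le_add hΔx hΔy) hK0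
    simp only [PhiMap, Set.indicator_of_mem ht]
    rw [← sub_smul, norm_smul, Real.norm_eq_abs]
    calc |m (xInt T a t) (yInt T lam a t) - m (xInt T b t) (yInt T lam b t)| * ‖lam t‖
        ≤ ((K:ℝ) * (c * Real.exp (β * (T - t)) / Real.sqrt (2 * β)
          + Λ * (c * Real.exp (β * (T - t)) / β))) * Λ :=
          mul_le_mul hΔm (hΛ t) (norm_nonneg _)
            (mul_nonneg hK0 (add_nonneg
              (div_nonneg (mul_nonneg hc (hEpos _).le) hsqrt2β.le)
              (mul_nonneg hΛ0 (div_nonneg (mul_nonneg hc (hEpos _).le) hβ0.le))))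
      _ = ((K:ℝ) * Λ / Real.sqrt (2 * β) + (K:ℝ) * Λ * Λ / β)
            * (c * Real.exp (β * (T - t))) := by ring
      _ ≤ 1 / 2 * (c * Real.exp (β * (T - t))) :=
          mul_le_mul_of_nonneg_right hcontr (mul_nonneg hc (hEpos _).le)
  -- Picard iterates
  have good_seq : ∀ n, Good T M (picard T lam m n) := by
    intro n; induction n with
    | zero => exact ⟨measurable_const, fun t => by
        rw [show picard T lam m 0 t = 0 from rfl, norm_zero]; exact hM0, fun t _ => rfl⟩
    | succ n ih => exact good_Phi _ ih
  have Dbound : ∀ n s, ‖picard T lam m (n+1) s - picard T lam m n s‖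
      ≤ 2 * M * (1/2)^n * Real.exp (β * (T - s)) := by
    intro n
    induction n with
    | zero =>
      intro s
      by_cases hs : s ∈ Set.Ico (0:ℝ) T
      · have h1 : ‖picard T lam m 1 s‖ ≤ M := (good_seq 1).2.1 s
        have hexp : (1:ℝ) ≤ Real.exp (β * (T - s)) :=
          Real.one_le_exp (by nlinarith [hs.1, hs.2] : (0:ℝ) ≤ β * (T - s))
        calc ‖picard T lam m 1 s - picard T lam m 0 s‖
            = ‖picard T lam m 1 s‖ := by rw [show picard T lam m 0 s = 0 from rfl, sub_zero]
          _ ≤ M := h1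
          _ ≤ 2 * M * (1/2)^0 * Real.exp (β * (T - s)) := by rw [pow_zero]; nlinarith
      · rw [(good_seq 1).2.2 s hs, (good_seq 0).2.2 s hs, sub_zero, norm_zero]
        have := (Real.exp_pos (β * (T - s))).le
        positivity
    | succ n ih =>
      intro s
      have h := key (2 * M * (1/2)^n) (by positivity) _ _ (good_seq (n+1)) (good_seq n)
        (fun u => ih u) s
      calc ‖picard T lam m (n+2) s - picard T lam m (n+1) s‖
          ≤ 1/2 * (2 * M * (1/2)^n * Real.exp (β * (T - s))) := h
        _ = 2 * M * (1/2)^(n+1) * Real.exp (β * (T - s)) := by ring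
  have Dbound' : ∀ s n, dist (picard T lam m n s) (picard T lam m (n+1) s)
      ≤ (2 * M * Real.exp (β * T)) * (1/2)^n := by
    intro s n
    rw [dist_eq_norm, norm_sub_rev]
    by_cases hs : s ∈ Set.Ico (0:ℝ) T
    · calc ‖picard T lam m (n+1) s - picard T lam m n s‖
          ≤ 2 * M * (1/2)^n * Real.exp (β * (T - s)) := Dbound n s
        _ ≤ 2 * M * (1/2)^n * Real.exp (β * T) := by
            apply mul_le_mul_of_nonneg_left (Real.exp_le_exp.2 (by nlinarith [hs.1]))
            positivity
        _ = (2 * M * Real.exp (β * T)) * (1/2)^n := by ring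
    · rw [(good_seq (n+1)).2.2 s hs, (good_seq n).2.2 s hs, sub_zero, norm_zero]
      have := (Real.exp_pos (β * T)).le
      positivity
  have hcauchy : ∀ s, ∃ l, Tendsto (fun n => picard T lam m n s) atTop (nhds l) := fun s =>
    cauchySeq_tendsto_of_complete
      (cauchySeq_of_le_geometric (1/2) (2 * M * Real.exp (β * T)) (by norm_num) (Dbound' s))
  choose aa haa using hcauchy
  have haaZ : ∀ s, s ∉ Set.Ico (0:ℝ) T → aa s = 0 := by
    intro s hs
    have h0 : (fun n => picard T lam m n s) = fun _ => (0 : EuclideanSpace ℝ (Fin d)) :=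
      funext fun n => (good_seq n).2.2 s hs
    exact tendsto_nhds_unique (h0 ▸ haa s) tendsto_const_nhds
  have haaM : ∀ s, ‖aa s‖ ≤ M := fun s =>
    le_of_tendsto (haa s).norm (Eventually.of_forall fun n => (good_seq n).2.1 s)
  have haa_meas : Measurable aa :=
    measurable_of_tendsto_metrizable (fun n => (good_seq n).1) (tendsto_pi_nhds.2 haa)
  have good_aa : Good T M aa := ⟨haa_meas, haaM, haaZ⟩
  have tail' : ∀ n s, ‖aa s - picard T lam m n s‖
      ≤ (4 * M * Real.exp (β * T)) * (1/2)^n * Real.exp (β * (T - s)) := by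
    intro n s
    by_cases hs : s ∈ Set.Ico (0:ℝ) T
    · have h := dist_le_of_le_geometric_of_tendsto (1/2) (2 * M * Real.exp (β * T))
        (by norm_num) (Dbound' s) (haa s) n
      rw [dist_comm, dist_eq_norm] at h
      have h2 : (2 * M * Real.exp (β * T)) * (1/2)^n / (1 - 1/2)
          = (4 * M * Real.exp (β * T)) * (1/2)^n := by ring
      have hexp : (1:ℝ) ≤ Real.exp (β * (T - s)) :=
        Real.one_le_exp (by nlinarith [hs.1, hs.2] : (0:ℝ) ≤ β * (T - s))
      calc ‖aa s - picard T lam m n s‖ ≤ (4 * M * Real.exp (β * T)) * (1/2)^n := by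
            rw [← h2]; exact h
        _ ≤ _ := le_mul_of_one_le_right (by positivity) hexp
    · rw [haaZ s hs, (good_seq n).2.2 s hs, sub_zero, norm_zero]
      have := (Real.exp_pos (β * T)).le
      have := (Real.exp_pos (β * (T - s))).le
      positivity
  have fix : ∀ t, aa t = PhiMap T lam m aa t := by
    intro t
    have h1 : Tendsto (fun n => picard T lam m (n+1) t) atTop (nhds (aa t)) :=
      (haa t).comp (tendsto_add_atTop_nat 1)
    have h2 : Tendsto (fun n => picard T lam m (n+1) t) atTop
        (nhds (PhiMap T lam m aa t)) := by
      rw [tendsto_iff_norm_sub_tendsto_zero]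
      apply squeeze_zero (g := fun n =>
          1/2 * ((4 * M * Real.exp (β * T)) * (1/2)^n * Real.exp (β * (T - t))))
        (fun n => norm_nonneg _) ?_ ?_
      · intro n
        have hcpos : (0:ℝ) ≤ (4 * M * Real.exp (β * T)) * (1/2)^n := by
          have := (Real.exp_pos (β * T)).le; positivity
        have h := key ((4 * M * Real.exp (β * T)) * (1/2)^n) hcpos
          (picard T lam m n) aa (good_seq n) good_aa
          (fun s => by rw [norm_sub_rev]; exact tail' n s) t
        exact h
      · have hpow : Tendsto (fun n : ℕ => ((1:ℝ)/2)^n) atTop (nhds 0) :=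
          tendsto_pow_atTop_nhds_zero_of_lt_one (by norm_num) (by norm_num)
        have h3 := hpow.const_mul
          (1/2 * ((4 * M * Real.exp (β * T)) * Real.exp (β * (T - t))))
        rw [mul_zero] at h3
        have heq : (fun n : ℕ =>
            1/2 * ((4 * M * Real.exp (β * T)) * (1/2)^n * Real.exp (β * (T - t))))
            = fun n : ℕ => (1/2 * ((4 * M * Real.exp (β * T)) * Real.exp (β * (T - t))))
              * (1/2)^n := by
          funext n; ring
        rw [heq]
        exact h3
    exact tendsto_nhds_unique h1 h2
  constructor
  · refine ⟨aa, haa_meas, ⟨M, haaM⟩, ?_⟩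
    intro t ht
    have h := fix t
    rw [PhiMap, Set.indicator_of_mem ht] at h
    simpa only [xInt, yInt] using h
  · intro a b ha_meas ha_bdd ha_eq hb_meas hb_bdd hb_eq t ht
    have hbdd' : ∀ (f : ℝ → EuclideanSpace ℝ (Fin d)),
        (∀ u ∈ Set.Ico (0:ℝ) T, f u
          = m (Real.sqrt (∫ s in Set.Ioc u T, ‖f s‖ ^ 2))
              (∫ s in Set.Ioc u T, (inner ℝ (f s) (lam s) : ℝ)) • lam u) →
        ∀ u ∈ Set.Ico (0:ℝ) T, ‖f u‖ ≤ M := by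
      intro f hf u hu
      rw [hf u hu, hMdef, norm_smul, Real.norm_eq_abs]
      exact mul_le_mul (hm_abs _ _ (Real.sqrt_nonneg _)) (hΛ u) (norm_nonneg _) hC₀.le
    set a' := Set.indicator (Set.Ico 0 T) a with ha'def
    set b' := Set.indicator (Set.Ico 0 T) b with hb'def
    have good_a' : Good T M a' := by
      refine ⟨ha_meas.indicator measurableSet_Ico, ?_,
        fun u hu => Set.indicator_of_notMem hu a⟩
      intro u
      by_cases hu : u ∈ Set.Ico (0:ℝ) T
      · rw [ha'def, Set.indicator_of_mem hu]; exact hbdd' a ha_eq u hu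
      · rw [ha'def, Set.indicator_of_notMem hu]; simpa using hM0
    have good_b' : Good T M b' := by
      refine ⟨hb_meas.indicator measurableSet_Ico, ?_,
        fun u hu => Set.indicator_of_notMem hu b⟩
      intro u
      by_cases hu : u ∈ Set.Ico (0:ℝ) T
      · rw [hb'def, Set.indicator_of_mem hu]; exact hbdd' b hb_eq u hu
      · rw [hb'def, Set.indicator_of_notMem hu]; simpa using hM0
    have hTae : ∀ᵐ s : ℝ, s ≠ T := by
      have h1 : {s : ℝ | ¬ s ≠ T} = {T} := by ext s; simp [not_not]
      rw [ae_iff, h1]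
      exact Real.volume_singleton
    have hcongr : ∀ (f : ℝ → EuclideanSpace ℝ (Fin d)) (u : ℝ), 0 ≤ u →
        ((∫ s in Set.Ioc u T, ‖Set.indicator (Set.Ico 0 T) f s‖ ^ 2)
          = ∫ s in Set.Ioc u T, ‖f s‖ ^ 2)
        ∧ ((∫ s in Set.Ioc u T, (inner ℝ (Set.indicator (Set.Ico 0 T) f s) (lam s) : ℝ))
          = ∫ s in Set.Ioc u T, (inner ℝ (f s) (lam s) : ℝ)) := by
      intro f u hu
      have hae : ∀ᵐ s : ℝ, s ∈ Set.Ioc u T → Set.indicator (Set.Ico 0 T) f s = f s := by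
        filter_upwards [hTae] with s hsne hs
        exact Set.indicator_of_mem
          (Set.mem_Ico.mpr ⟨le_trans hu hs.1.le, lt_of_le_of_ne hs.2 hsne⟩) f
      constructor
      · exact setIntegral_congr_ae measurableSet_Ioc (hae.mono fun s h hs => by rw [h hs])
      · exact setIntegral_congr_ae measurableSet_Ioc (hae.mono fun s h hs => by rw [h hs])
    have fix_a' : ∀ u, a' u = PhiMap T lam m a' u := by
      intro u
      by_cases hu : u ∈ Set.Ico (0:ℝ) T
      · rw [PhiMap, Set.indicator_of_mem hu]
        simp only [xInt, yInt]
        rw [ha'def, Set.indicator_of_mem hu, (hcongr a u hu.1).1, (hcongr a u hu.1).2]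
        exact ha_eq u hu
      · rw [PhiMap, Set.indicator_of_notMem hu, ha'def, Set.indicator_of_notMem hu]
    have fix_b' : ∀ u, b' u = PhiMap T lam m b' u := by
      intro u
      by_cases hu : u ∈ Set.Ico (0:ℝ) T
      · rw [PhiMap, Set.indicator_of_mem hu]
        simp only [xInt, yInt]
        rw [hb'def, Set.indicator_of_mem hu, (hcongr b u hu.1).1, (hcongr b u hu.1).2]
        exact hb_eq u hu
      · rw [PhiMap, Set.indicator_of_notMem hu, hb'def, Set.indicator_of_notMem hu]
    have contract : ∀ n u, ‖a' u - b' u‖ ≤ 2 * M * (1/2)^n * Real.exp (β * (T - u)) := by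
      intro n
      induction n with
      | zero =>
        intro u
        by_cases hu : u ∈ Set.Ico (0:ℝ) T
        · have h1 := good_a'.2.1 u
          have h2 := good_b'.2.1 u
          have hexp : (1:ℝ) ≤ Real.exp (β * (T - u)) :=
            Real.one_le_exp (by nlinarith [hu.1, hu.2] : (0:ℝ) ≤ β * (T - u))
          calc ‖a' u - b' u‖ ≤ ‖a' u‖ + ‖b' u‖ := norm_sub_le _ _
            _ ≤ 2 * M * (1/2)^0 * Real.exp (β * (T - u)) := by rw [pow_zero]; nlinarith
        · rw [good_a'.2.2 u hu, good_b'.2.2 u hu, sub_zero, norm_zero]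
          have := (Real.exp_pos (β * (T - u))).le
          positivity
      | succ n ih =>
        intro u
        rw [fix_a' u, fix_b' u]
        have h := key (2 * M * (1/2)^n) (by positivity) a' b' good_a' good_b'
          (fun s => ih s) u
        calc ‖PhiMap T lam m a' u - PhiMap T lam m b' u‖
            ≤ 1/2 * (2 * M * (1/2)^n * Real.exp (β * (T - u))) := h
          _ = 2 * M * (1/2)^(n+1) * Real.exp (β * (T - u)) := by ring
    have hzero : ‖a' t - b' t‖ ≤ 0 := by
      have hpow : Tendsto (fun n : ℕ => ((1:ℝ)/2)^n) atTop (nhds 0) :=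
        tendsto_pow_atTop_nhds_zero_of_lt_one (by norm_num) (by norm_num)
      have h3 := hpow.const_mul (2 * M * Real.exp (β * (T - t)))
      rw [mul_zero] at h3
      have heq : (fun n : ℕ => (2 * M * Real.exp (β * (T - t))) * (1/2)^n)
          = fun n : ℕ => 2 * M * (1/2)^n * Real.exp (β * (T - t)) := by
        funext n; ring
      rw [heq] at h3
      exact ge_of_tendsto h3 (Eventually.of_forall fun n => contract n t)
    have heqt : a' t = b' t :=
      sub_eq_zero.1 (norm_eq_zero.1 (le_antisymm hzero (norm_nonneg _)))
    rw [ha'def, hb'def, Set.indicator_of_mem ht, Set.indicator_of_mem ht] at heqt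
    exact heqt
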